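/- If (X,Y) is a solution of System (*), then for every choice of five points T₁,T₂,T₃,T₄,T₅ among the six points A,B,C,D,E,F, the determinant of the 5×5 matrix whose first row is (Γ_{T₁}(Y), Γ_{T₂}(Y), Γ_{T₃}(Y), Γ_{T₄}(Y), Γ_{T₅}(Y)), whose second, third and fourth rows are the first, second and third coordinates of T₁,…,T₅ respectively, and whose last row is (1,1,1,1,1), is equal to zero. (At any solution one has k_T‖Y−T‖² > 1 for all T, so each Γ_T(Y) is defined.) -/

import Mathlib

noncomputable section

/-- The Euclidean space ℝ³. -/
abbrev E3 := EuclideanSpace ℝ (Fin 3)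

/-- `kc Xs Ys T` is the constant `k_T = 1/‖X*−T‖² + 1/‖Y*−T‖²`. -/
def kc (Xs Ys T : E3) : ℝ := 1 / ‖Xs - T‖ ^ 2 + 1 / ‖Ys - T‖ ^ 2

/-- `(X, Y)` is a solution of System (*). -/
def IsSol (A B C D E F Xs Ys X Y : E3) : Prop :=
  ∀ T ∈ ({A, B, C, D, E, F} : Set E3),
    X ≠ T ∧ Y ≠ T ∧ 1 / ‖X - T‖ ^ 2 + 1 / ‖Y - T‖ ^ 2 = kc Xs Ys T

/-- Condition (i): no four of the six points `A,B,C,D,E,F` are coplanar. -/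
def CondI (A B C D E F : E3) : Prop :=
  ∀ T₁ T₂ T₃ T₄ : E3,
    T₁ ∈ ({A, B, C, D, E, F} : Set E3) → T₂ ∈ ({A, B, C, D, E, F} : Set E3) →
    T₃ ∈ ({A, B, C, D, E, F} : Set E3) → T₄ ∈ ({A, B, C, D, E, F} : Set E3) →
    T₁ ≠ T₂ → T₁ ≠ T₃ → T₁ ≠ T₄ → T₂ ≠ T₃ → T₂ ≠ T₄ → T₃ ≠ T₄ →
    ¬ Coplanar ℝ ({T₁, T₂, T₃, T₄} : Set E3)

/-- Condition (ii): no four of the six spheres of center `T` and radius `1/√k_T`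
share a common point of ℝ³. -/
def CondII (A B C D E F Xs Ys : E3) : Prop :=
  ∀ T₁ T₂ T₃ T₄ : E3,
    T₁ ∈ ({A, B, C, D, E, F} : Set E3) → T₂ ∈ ({A, B, C, D, E, F} : Set E3) →
    T₃ ∈ ({A, B, C, D, E, F} : Set E3) → T₄ ∈ ({A, B, C, D, E, F} : Set E3) →
    T₁ ≠ T₂ → T₁ ≠ T₃ → T₁ ≠ T₄ → T₂ ≠ T₃ → T₂ ≠ T₄ → T₃ ≠ T₄ →
    ¬ ∃ P : E3,
        ‖P - T₁‖ ^ 2 = 1 / kc Xs Ys T₁ ∧ ‖P - T₂‖ ^ 2 = 1 / kc Xs Ys T₂ ∧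
        ‖P - T₃‖ ^ 2 = 1 / kc Xs Ys T₃ ∧ ‖P - T₄‖ ^ 2 = 1 / kc Xs Ys T₄

/-- `Γ_T(Y) = ‖Y−T‖²/(k_T‖Y−T‖² − 1) − ‖T‖²`. -/
def Gamma (Xs Ys T Y : E3) : ℝ :=
  ‖Y - T‖ ^ 2 / (kc Xs Ys T * ‖Y - T‖ ^ 2 - 1) - ‖T‖ ^ 2

/-- Key computation: at a solution, `k_T‖Y−T‖² > 1` and
`Γ_T(Y) = ‖X‖² − 2⟨X,T⟩`. -/
lemma gamma_key (Xs Ys X Y T : E3) (hX : X ≠ T) (hY : Y ≠ T)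
    (heq : 1 / ‖X - T‖ ^ 2 + 1 / ‖Y - T‖ ^ 2 = kc Xs Ys T) :
    kc Xs Ys T * ‖Y - T‖ ^ 2 > 1 ∧
    Gamma Xs Ys T Y = ‖X‖ ^ 2 - 2 * (X 0 * T 0 + X 1 * T 1 + X 2 * T 2) := by
  have ha : (0:ℝ) < ‖X - T‖ ^ 2 := by
    have := norm_pos_iff.mpr (sub_ne_zero.mpr hX); positivity
  have hb : (0:ℝ) < ‖Y - T‖ ^ 2 := by
    have := norm_pos_iff.mpr (sub_ne_zero.mpr hY); positivity
  have hk : kc Xs Ys T * ‖Y - T‖ ^ 2 - 1 = ‖Y - T‖ ^ 2 / ‖X - T‖ ^ 2 := by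
    rw [← heq]; field_simp [norm_ne_zero_iff.mpr (sub_ne_zero.mpr hX), norm_ne_zero_iff.mpr (sub_ne_zero.mpr hY)]; ring
  have hgt : kc Xs Ys T * ‖Y - T‖ ^ 2 > 1 := by
    have : (0:ℝ) < ‖Y - T‖ ^ 2 / ‖X - T‖ ^ 2 := by positivity
    linarith [hk]
  refine ⟨hgt, ?_⟩
  have h2 : ‖Y - T‖ ^ 2 / (kc Xs Ys T * ‖Y - T‖ ^ 2 - 1) = ‖X - T‖ ^ 2 := by
    rw [hk]; field_simp [norm_ne_zero_iff.mpr (sub_ne_zero.mpr hX), norm_ne_zero_iff.mpr (sub_ne_zero.mpr hY)]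
  have h3 : ‖X - T‖ ^ 2 = ‖X‖ ^ 2 - 2 * inner ℝ X T + ‖T‖ ^ 2 := by
    rw [← real_inner_self_eq_norm_sq, ← real_inner_self_eq_norm_sq,
      ← real_inner_self_eq_norm_sq, inner_sub_sub_self, real_inner_comm T X]; ring
  have h4 : (inner ℝ X T : ℝ) = X 0 * T 0 + X 1 * T 1 + X 2 * T 2 := by
    simp [PiLp.inner_apply, Fin.sum_univ_three, RCLike.inner_apply, mul_comm]
  rw [Gamma, h2, h3, h4]; ring

set_option maxRecDepth 4000 in
/-- A 5×5 determinant whose first row is an affine combination of the other four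
rows vanishes. -/
lemma det5_zero (K x0 x1 x2 g1 g2 g3 g4 g5 a1 a2 a3 a4 a5 b1 b2 b3 b4 b5
    c1 c2 c3 c4 c5 : ℝ)
    (h1 : g1 = K - 2 * (x0 * a1 + x1 * b1 + x2 * c1))
    (h2 : g2 = K - 2 * (x0 * a2 + x1 * b2 + x2 * c2))
    (h3 : g3 = K - 2 * (x0 * a3 + x1 * b3 + x2 * c3))
    (h4 : g4 = K - 2 * (x0 * a4 + x1 * b4 + x2 * c4))
    (h5 : g5 = K - 2 * (x0 * a5 + x1 * b5 + x2 * c5)) :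
    Matrix.det !![g1, g2, g3, g4, g5; a1, a2, a3, a4, a5; b1, b2, b3, b4, b5;
      c1, c2, c3, c4, c5; 1, 1, 1, 1, 1] = 0 := by
  set M : Matrix (Fin 5) (Fin 5) ℝ :=
    !![g1, g2, g3, g4, g5; a1, a2, a3, a4, a5; b1, b2, b3, b4, b5;
      c1, c2, c3, c4, c5; 1, 1, 1, 1, 1] with hM
  have h : M 0 = ∑ k, (![0, -2*x0, -2*x1, -2*x2, K] : Fin 5 → ℝ) k • M k := by
    funext j
    simp only [Finset.sum_apply, Pi.smul_apply, smul_eq_mul, Fin.sum_univ_five]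
    fin_cases j <;>
      simp [hM, Matrix.cons_val_zero, Matrix.cons_val_one, Matrix.head_cons] <;>
      linarith
  have hd := Matrix.det_updateRow_sum M 0 (![0, -2*x0, -2*x1, -2*x2, K] : Fin 5 → ℝ)
  rw [← h, Matrix.updateRow_eq_self] at hd
  simpa using hd

/-- At any solution (X,Y) of System (*), each Γ_T(Y) is defined and for every choice of
five distinct points T₁,…,T₅ among A,…,F the 5×5 determinant with first row
(Γ_{T₁}(Y),…,Γ_{T₅}(Y)), next three rows the coordinates of the Tᵢ's, and last row all
ones, vanishes. -/
theorem gamma_det_five_points (A B C D E F Xs Ys : E3)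
    (hdist : List.Pairwise (· ≠ ·) [A, B, C, D, E, F, Xs, Ys])
    (X Y : E3) (hsol : IsSol A B C D E F Xs Ys X Y) :
    (∀ T ∈ ({A, B, C, D, E, F} : Set E3), kc Xs Ys T * ‖Y - T‖ ^ 2 > 1) ∧
    ∀ T₁ T₂ T₃ T₄ T₅ : E3,
      T₁ ∈ ({A, B, C, D, E, F} : Set E3) → T₂ ∈ ({A, B, C, D, E, F} : Set E3) →
      T₃ ∈ ({A, B, C, D, E, F} : Set E3) → T₄ ∈ ({A, B, C, D, E, F} : Set E3) →
      T₅ ∈ ({A, B, C, D, E, F} : Set E3) →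
      List.Pairwise (· ≠ ·) [T₁, T₂, T₃, T₄, T₅] →
      Matrix.det
        !![Gamma Xs Ys T₁ Y, Gamma Xs Ys T₂ Y, Gamma Xs Ys T₃ Y,
             Gamma Xs Ys T₄ Y, Gamma Xs Ys T₅ Y;
           T₁ 0, T₂ 0, T₃ 0, T₄ 0, T₅ 0;
           T₁ 1, T₂ 1, T₃ 1, T₄ 1, T₅ 1;
           T₁ 2, T₂ 2, T₃ 2, T₄ 2, T₅ 2;
           1, 1, 1, 1, 1] = 0 := by
  have hkey : ∀ T ∈ ({A, B, C, D, E, F} : Set E3),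
      kc Xs Ys T * ‖Y - T‖ ^ 2 > 1 ∧
      Gamma Xs Ys T Y = ‖X‖ ^ 2 - 2 * (X 0 * T 0 + X 1 * T 1 + X 2 * T 2) := by
    intro T hT
    obtain ⟨hX, hY, heq⟩ := hsol T hT
    exact gamma_key Xs Ys X Y T hX hY heq
  refine ⟨fun T hT => (hkey T hT).1, ?_⟩
  intro T₁ T₂ T₃ T₄ T₅ h1 h2 h3 h4 h5 _
  exact det5_zero (‖X‖ ^ 2) (X 0) (X 1) (X 2) _ _ _ _ _ _ _ _ _ _ _ _ _ _ _ _ _ _ _ _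
    (hkey T₁ h1).2 (hkey T₂ h2).2 (hkey T₃ h3).2 (hkey T₄ h4).2 (hkey T₅ h5).2
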